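/- Let x be a factor-balanced infinite word over a finite alphabet A, and let y and y′ be recurrent infinite words over A with L(y) ⊆ L(x) and L(y′) ⊆ L(x). Then: (1) y is uniformly recurrent; (2) L(y) = L(y′). In particular, every factor-balanced recurrent infinite word is uniformly recurrent. -/
import Mathlib


open scoped Classical

section Core

variable {A : Type*} {B : Type*}

/-- `w` occurs at position `i` of the infinite word `x`. -/
def OccursAt (x : ℕ → A) (w : List A) (i : ℕ) : Prop :=
  w = (List.range w.length).map fun j => x (i + j)

/-- `w` is a factor of the infinite word `x`. -/
def IsFactor (x : ℕ → A) (w : List A) : Prop := ∃ i, OccursAt x w i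

/-- The number of (possibly overlapping) occurrences of `w` in the finite word `u`,
i.e. `|u|_w`. -/
noncomputable def countOccs (u w : List A) : ℕ :=
  ((Finset.range (u.length + 1)).filter fun i => w <+: u.drop i).card

/-- The finite word `w` is `C`-balanced in the infinite word `x`. -/
def BalancedIn (C : ℝ) (w : List A) (x : ℕ → A) : Prop :=
  ∀ u v : List A, IsFactor x u → IsFactor x v → u.length = v.length →
    |(countOccs u w : ℝ) - (countOccs v w : ℝ)| ≤ C

/-- Every finite word is `C_w`-balanced in `x` for some constant `C_w > 0`. -/
def FactorBalanced (x : ℕ → A) : Prop :=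
  ∀ w : List A, ∃ C : ℝ, 0 < C ∧ BalancedIn C w x

/-- There is a single constant `C > 0` such that every finite word is `C`-balanced in `x`. -/
def UniformlyFactorBalanced (x : ℕ → A) : Prop :=
  ∃ C : ℝ, 0 < C ∧ ∀ w : List A, BalancedIn C w x

/-- Every letter is `C`-balanced in `x`. -/
def LetterBalanced (C : ℝ) (x : ℕ → A) : Prop :=
  ∀ a : A, BalancedIn C [a] x

/-- `x` is `P`-power-free: no factor of `x` is a `P`-th power of a nonempty word. -/
def PowerFree (P : ℕ) (x : ℕ → A) : Prop :=
  ∀ v : List A, v ≠ [] → ¬ IsFactor x (List.flatten (List.replicate P v))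

/-- The length-`n` prefix of the infinite word `x`. -/
def wordPrefix (x : ℕ → A) (n : ℕ) : List A := (List.range n).map x

/-- The extension of a substitution to finite words. -/
def substWord (τ : A → List B) (w : List A) : List B := (w.map τ).flatten

/-- The word `w` has (prefix) frequency `μ` in `x`. -/
def HasFreq (x : ℕ → A) (w : List A) (μ : ℝ) : Prop :=
  Filter.Tendsto (fun n => (countOccs (wordPrefix x n) w : ℝ) / n)
    Filter.atTop (nhds μ)

/-- `τ` is `k`-decisive in `x` with witness map `r` (each `r a` of length `k ≥ 1`,
and `τ b` starts with `r a` whenever `ab` is a factor of `x`). -/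
def DecisiveWith (τ : A → List B) (x : ℕ → A) (r : A → List B) (k : ℕ) : Prop :=
  1 ≤ k ∧ (∀ a, (r a).length = k) ∧
    ∀ a b : A, IsFactor x [a, b] → r a <+: τ b

/-- `τ` is `k`-decisive in `x`. -/
def Decisive (τ : A → List B) (x : ℕ → A) (k : ℕ) : Prop :=
  ∃ r : A → List B, DecisiveWith τ x r k

/-- The image of the infinite word `x` under the substitution `τ`: when the images of
prefixes of `x` have unbounded length, `substInf τ x` is the infinite word `τ(x)`. -/
noncomputable def substInf [Nonempty B] (τ : A → List B) (x : ℕ → A) (j : ℕ) : B :=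
  if h : ∃ n, j < (substWord τ (wordPrefix x n)).length
  then (substWord τ (wordPrefix x (Nat.find h))).get ⟨j, Nat.find_spec h⟩
  else Classical.arbitrary B

/-- Iterates of a substitution: `substIter τ n a = τ^n(a)` as a finite word. -/
def substIter (τ : A → List A) : ℕ → A → List A
  | 0, a => [a]
  | n+1, a => substWord (substIter τ n) (τ a)

/-- `τ` is prolongable on the letter `a`. -/
def Prolongable (τ : A → List A) (a : A) : Prop :=
  (τ a).head? = some a ∧ (∀ b, τ b ≠ []) ∧
    Filter.Tendsto (fun n => (substIter τ n a).length) Filter.atTop Filter.atTop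

/-- The fixed point `τ^ω(a)` of a substitution prolongable on `a`:
the limit of the prefix chain `τ^n(a)`. -/
noncomputable def fixedPoint (τ : A → List A) (a : A) (j : ℕ) : A :=
  if h : ∃ n, j < (substIter τ n a).length
  then (substIter τ (Nat.find h) a).get ⟨j, Nat.find_spec h⟩
  else a

/-- The factor complexity of `x`: the number of distinct length-`n` factors. -/
noncomputable def complexity (x : ℕ → A) (n : ℕ) : ℕ :=
  Set.ncard {w : List A | w.length = n ∧ IsFactor x w}

/-- Every factor of `x` occurs infinitely often in `x`. -/
def Recurrent (x : ℕ → A) : Prop :=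
  ∀ w : List A, IsFactor x w → ∀ N : ℕ, ∃ i, N ≤ i ∧ OccursAt x w i

/-- For every factor `w` of `x` there is `k` such that `w` occurs in
every length-`k` factor of `x`. -/
def UniformlyRecurrent (x : ℕ → A) : Prop :=
  ∀ w : List A, IsFactor x w → ∃ k : ℕ, ∀ v : List A, IsFactor x v →
    v.length = k → 1 ≤ countOccs v w

end Core

section H
variable {A : Type*}

def fA (z : ℕ → A) (i n : ℕ) : List A := (List.range n).map fun j => z (i + j)

@[simp] lemma fA_length (z : ℕ → A) (i n : ℕ) : (fA z i n).length = n := by simp [fA]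

@[simp] lemma fA_getElem (z : ℕ → A) (i n j : ℕ) (h : j < (fA z i n).length) :
    (fA z i n)[j] = z (i + j) := by simp [fA]

lemma fA_drop (z : ℕ → A) (i n k : ℕ) : (fA z i n).drop k = fA z (i + k) (n - k) := by
  apply List.ext_getElem
  · simp
  · intro j h1 h2
    simp only [List.getElem_drop, fA_getElem]
    congr 1; omega

lemma fA_take (z : ℕ → A) (i n k : ℕ) : (fA z i n).take k = fA z i (min k n) := by
  apply List.ext_getElem
  · simp
  · intro j h1 h2
    simp only [List.getElem_take, fA_getElem]

lemma fA_prefix (z : ℕ → A) (i : ℕ) {m n : ℕ} (h : m ≤ n) :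
    fA z i m <+: fA z i n := by
  have := List.take_prefix m (fA z i n)
  rwa [fA_take, min_eq_left h] at this

lemma occursAt_iff (z : ℕ → A) (w : List A) (i : ℕ) :
    OccursAt z w i ↔ w = fA z i w.length := Iff.rfl

lemma wordPrefix_eq (z : ℕ → A) (n : ℕ) : wordPrefix z n = fA z 0 n := by
  simp [wordPrefix, fA]

lemma wordPrefix_isFactor (z : ℕ → A) (n : ℕ) : IsFactor z (wordPrefix z n) := by
  refine ⟨0, ?_⟩
  rw [occursAt_iff, wordPrefix_eq]
  simp

@[simp] lemma wordPrefix_length (z : ℕ → A) (n : ℕ) : (wordPrefix z n).length = n := by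
  simp [wordPrefix]

lemma occ_prefix_drop {z : ℕ → A} {w : List A} {i N : ℕ} (h : OccursAt z w i)
    (hN : i + w.length ≤ N) : w <+: (wordPrefix z N).drop i := by
  rw [wordPrefix_eq, fA_drop, Nat.zero_add]
  rw [occursAt_iff] at h
  rw [h]
  exact fA_prefix z i (by omega)

lemma factor_of_count {z : ℕ → A} {v w : List A} (hv : IsFactor z v)
    (hc : 1 ≤ countOccs v w) : IsFactor z w := by
  obtain ⟨j, hj⟩ := hv
  rw [occursAt_iff] at hj
  obtain ⟨i, hi⟩ := Finset.card_pos.mp hc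
  have hpre : w <+: v.drop i := (Finset.mem_filter.mp hi).2
  have hdrop : v.drop i = fA z (j + i) (v.length - i) := by
    conv_lhs => rw [hj]
    rw [fA_drop]
  refine ⟨j + i, ?_⟩
  rw [occursAt_iff]
  have hlen : w.length ≤ v.length - i := by
    have := hpre.length_le
    rw [hdrop, fA_length] at this
    omega
  have hw : w = (v.drop i).take w.length := (List.prefix_iff_eq_take.mp hpre)
  rw [hw, hdrop, fA_take, min_eq_left hlen]
  congr 1
  rw [hw, hdrop, fA_take]
  simp

end H

section H2
variable {A : Type*}

lemma countOccs_nil (v : List A) : countOccs v ([] : List A) = v.length + 1 := by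
  unfold countOccs
  rw [Finset.filter_true_of_mem (fun i _ => List.nil_prefix)]
  simp

lemma countOccs_prefix_eq (z : ℕ → A) (N : ℕ) (w : List A) :
    countOccs (wordPrefix z N) w
      = ((Finset.range (N + 1)).filter fun i => w <+: (wordPrefix z N).drop i).card := by
  simp [countOccs]

lemma prefix_drop_mono (z : ℕ → A) (j : ℕ) {N N' : ℕ} (h : N ≤ N') :
    (wordPrefix z N).drop j <+: (wordPrefix z N').drop j := by
  rw [wordPrefix_eq, wordPrefix_eq, fA_drop, fA_drop]
  exact fA_prefix z _ (by omega)

lemma exists_many {z : ℕ → A} {w : List A} (hrec : Recurrent z) (hw : IsFactor z w)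
    (hwne : w ≠ []) (m : ℕ) : ∃ N, m ≤ countOccs (wordPrefix z N) w := by
  have hwl : 1 ≤ w.length := List.length_pos_iff.mpr hwne
  induction m with
  | zero => exact ⟨0, Nat.zero_le _⟩
  | succ m ih =>
    obtain ⟨N, hN⟩ := ih
    obtain ⟨i, hiN, hocc⟩ := hrec w hw N
    refine ⟨i + w.length, ?_⟩
    set N' := i + w.length with hN'def
    have hNN' : N ≤ N' := by omega
    rw [countOccs_prefix_eq] at hN ⊢
    set S := (Finset.range (N + 1)).filter fun j => w <+: (wordPrefix z N).drop j with hS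
    set S' := (Finset.range (N' + 1)).filter fun j => w <+: (wordPrefix z N').drop j with hS'
    have hsubS : insert i S ⊆ S' := by
      intro j hj
      rcases Finset.mem_insert.mp hj with rfl | hj
      · exact Finset.mem_filter.mpr ⟨Finset.mem_range.mpr (by omega),
          occ_prefix_drop hocc (le_refl _)⟩
      · obtain ⟨hj1, hj2⟩ := Finset.mem_filter.mp hj
        exact Finset.mem_filter.mpr ⟨Finset.mem_range.mpr
          (by have := Finset.mem_range.mp hj1; omega),
          hj2.trans (prefix_drop_mono z j hNN')⟩
    have hnotmem : i ∉ S := by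
      intro hmem
      have h2 := (Finset.mem_filter.mp hmem).2
      have := h2.length_le
      rw [List.length_drop, wordPrefix_length] at this
      omega
    have hcard : S.card + 1 ≤ S'.card := by
      have := Finset.card_le_card hsubS
      rwa [Finset.card_insert_of_notMem hnotmem] at this
    omega

lemma keyB {x y : ℕ → A} (hx : FactorBalanced x) (hy : Recurrent y)
    (hsub : ∀ w, IsFactor y w → IsFactor x w) {w : List A} (hw : IsFactor y w) :
    ∃ N, ∀ v : List A, IsFactor x v → v.length = N → 1 ≤ countOccs v w := by
  by_cases hwe : w = []
  · subst hwe
    exact ⟨0, fun v _ _ => by rw [countOccs_nil]; omega⟩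
  obtain ⟨C, hC, hbal⟩ := hx w
  obtain ⟨N, hN⟩ := exists_many hy hw hwe (⌈C⌉₊ + 1)
  refine ⟨N, fun v hv hvlen => ?_⟩
  have hu : IsFactor x (wordPrefix y N) := hsub _ (wordPrefix_isFactor y N)
  have hb := hbal (wordPrefix y N) v hu hv (by simp [hvlen])
  have h1 : ((⌈C⌉₊ : ℝ) + 1) ≤ (countOccs (wordPrefix y N) w : ℝ) := by exact_mod_cast hN
  have h2 : (C : ℝ) ≤ (⌈C⌉₊ : ℝ) := Nat.le_ceil C
  have h3 := abs_le.mp hb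
  have hpos : (0:ℝ) < (countOccs v w : ℝ) := by linarith [h3.1, h3.2]
  have := Nat.cast_pos.mp hpos
  omega

end H2


/-- Proposition: if `x` is factor-balanced and `y, y'` are recurrent words whose factors
are factors of `x`, then `y` is uniformly recurrent and `L(y) = L(y')`; in particular,
every factor-balanced recurrent word is uniformly recurrent. -/
theorem stmt9 {A : Type*} [Fintype A] (x y y' : ℕ → A)
    (hx : FactorBalanced x) (hy : Recurrent y) (hy' : Recurrent y')
    (hsub : ∀ w : List A, IsFactor y w → IsFactor x w)
    (hsub' : ∀ w : List A, IsFactor y' w → IsFactor x w) :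
    (UniformlyRecurrent y ∧ ∀ w : List A, IsFactor y w ↔ IsFactor y' w) ∧
      ∀ z : ℕ → A, FactorBalanced z → Recurrent z → UniformlyRecurrent z := by
  have uy : UniformlyRecurrent y := by
    intro w hw
    obtain ⟨N, hN⟩ := keyB hx hy hsub hw
    exact ⟨N, fun v hv hlen => hN v (hsub v hv) hlen⟩
  refine ⟨⟨uy, fun w => ⟨?_, ?_⟩⟩, ?_⟩
  · intro hw
    obtain ⟨N, hN⟩ := keyB hx hy hsub hw
    exact factor_of_count (wordPrefix_isFactor y' N)
      (hN _ (hsub' _ (wordPrefix_isFactor y' N)) (wordPrefix_length y' N))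
  · intro hw
    obtain ⟨N, hN⟩ := keyB hx hy' hsub' hw
    exact factor_of_count (wordPrefix_isFactor y N)
      (hN _ (hsub _ (wordPrefix_isFactor y N)) (wordPrefix_length y N))
  · intro z hz hzrec w hw
    exact keyB hz hzrec (fun _ h => h) hw
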